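/- Two automorphisms τ₃(α₁,α₂,α₆) and τ₃(α₁',α₂',α₆') (with α₂,α₂' ≠ 0) of the Heisenberg Lie algebra that are distinct commute if and only if α₁' = −α₁ and α₂' = −α₂. -/

import Mathlib

/-- The Lie bracket of the 3-dimensional Heisenberg Lie algebra `𝔥₃` in the
basis `X₁, X₂, X₃` with `[X₁,X₂] = X₃` and `X₃` central, written in coordinates. -/
def heisBracket (x y : Fin 3 → ℝ) : Fin 3 → ℝ :=
  ![0, 0, x 0 * y 1 - x 1 * y 0]

/-- A matrix `M` (in the basis `X₁,X₂,X₃`) is a Lie algebra automorphism of `𝔥₃`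
iff it is invertible and preserves the bracket. -/
def IsHeisAut (M : Matrix (Fin 3) (Fin 3) ℝ) : Prop :=
  M.det ≠ 0 ∧ ∀ x y : Fin 3 → ℝ,
    M.mulVec (heisBracket x y) = heisBracket (M.mulVec x) (M.mulVec y)

noncomputable def tau1 (a3 a6 : ℝ) : Matrix (Fin 3) (Fin 3) ℝ :=
  !![-1, 0, 0; a3, 1, 0; a3 * a6 / 2, a6, -1]

def tau2 (a3 a5 : ℝ) : Matrix (Fin 3) (Fin 3) ℝ :=
  !![1, 0, 0; a3, -1, 0; a5, 0, -1]

noncomputable def tau3 (a1 a2 a6 : ℝ) : Matrix (Fin 3) (Fin 3) ℝ :=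
  !![a1, a2, 0; (1 - a1 ^ 2) / a2, -a1, 0; (1 + a1) * a6 / a2, a6, -1]

def tau4 (a5 a6 : ℝ) : Matrix (Fin 3) (Fin 3) ℝ :=
  !![-1, 0, 0; 0, -1, 0; a5, a6, 1]

/-- Two distinct automorphisms `τ₃(α₁,α₂,α₆)` and `τ₃(α₁',α₂',α₆')` (with
`α₂, α₂' ≠ 0`) commute iff `α₁' = -α₁` and `α₂' = -α₂`. -/
theorem tau3_commute_iff (a1 a2 a6 b1 b2 b6 : ℝ) (ha2 : a2 ≠ 0) (hb2 : b2 ≠ 0)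
    (hne : tau3 a1 a2 a6 ≠ tau3 b1 b2 b6) :
    tau3 a1 a2 a6 * tau3 b1 b2 b6 = tau3 b1 b2 b6 * tau3 a1 a2 a6 ↔
      b1 = -a1 ∧ b2 = -a2 := by
  constructor
  · intro h
    have e01 : (tau3 a1 a2 a6 * tau3 b1 b2 b6) 0 1 = (tau3 b1 b2 b6 * tau3 a1 a2 a6) 0 1 := by
      rw [h]
    have e00 : (tau3 a1 a2 a6 * tau3 b1 b2 b6) 0 0 = (tau3 b1 b2 b6 * tau3 a1 a2 a6) 0 0 := by
      rw [h]
    have e21 : (tau3 a1 a2 a6 * tau3 b1 b2 b6) 2 1 = (tau3 b1 b2 b6 * tau3 a1 a2 a6) 2 1 := by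
      rw [h]
    simp only [tau3, Matrix.mul_apply, Fin.sum_univ_three, Matrix.cons_val_zero,
      Matrix.cons_val_one, Matrix.head_cons, Matrix.cons_val_two, Matrix.tail_cons,
      Matrix.head_fin_const, Matrix.cons_val', Matrix.cons_val_fin_one,
      Matrix.empty_val', Matrix.of_apply] at e01 e00 e21
    field_simp at e01 e00 e21
    have h01 : a1 * b2 = a2 * b1 := by linarith
    have hsq : (a2 * b1) ^ 2 = (a1 * b2) ^ 2 := by rw [h01]
    have h2 : (b2 - a2) * (b2 + a2) = 0 := by linear_combination -e00 - hsq
    rcases mul_eq_zero.1 h2 with hk | hk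
    · exfalso
      have hk : b2 = a2 := by linarith
      subst hk
      have hb1 : b1 = a1 := mul_left_cancel₀ ha2 (by linarith)
      subst hb1
      have ha2sq : (0:ℝ) < b2 ^ 2 := by positivity
      have hb6 : b6 = a6 := by nlinarith [e21]
      exact hne (by rw [hb6])
    · have hk2 : b2 = -a2 := by linarith
      subst hk2
      have hb1 : b1 = -a1 := mul_left_cancel₀ ha2 (by linarith)
      exact ⟨hb1, rfl⟩
  · rintro ⟨rfl, rfl⟩
    ext i j
    fin_cases i <;> fin_cases j <;>
      · simp only [tau3, Matrix.mul_apply, Fin.sum_univ_three, Matrix.cons_val_zero,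
          Matrix.cons_val_one, Matrix.head_cons, Matrix.cons_val_two, Matrix.tail_cons,
          Matrix.head_fin_const, Matrix.cons_val', Matrix.cons_val_fin_one, Matrix.empty_val',
          Fin.isValue, Fin.mk_one, Fin.mk_zero, Matrix.of_apply, Fin.reduceFinMk]
        field_simp
        try ring
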